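/- arXiv:1403.7793 — 9 statements merged into one kernel-verified Lean document; each statement's English description precedes it below -/
import Mathlib

section
/- For every feasible quadruple (d1, d2, r, L) of the pressure vessel design problem, f(d1,d2,r,L) ≥ f(0.8125, 0.4375, R*, L*), where R* = 0.8125/0.0193 and L* = 1296000/(π·R*²) − (4/3)·R*. That is, x* = (0.8125, 0.4375, R*, L*) is a global minimizer of the pressure vessel design problem. -/
/-- The pressure vessel design problem objective. -/
noncomputable def pvObj (d1 d2 r L : ℝ) : ℝ :=
  0.6224 * d1 * r * L + 1.7781 * d2 * r ^ 2 + 3.1661 * d1 ^ 2 * L + 19.84 * d1 ^ 2 * r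

/-- Feasibility for the pressure vessel design problem. -/
def pvFeasible (d1 d2 r L : ℝ) : Prop :=
  (∃ I J : ℤ, 1 ≤ I ∧ I ≤ 99 ∧ 1 ≤ J ∧ J ≤ 99 ∧
      d1 = (I : ℝ) * 0.0625 ∧ d2 = (J : ℝ) * 0.0625) ∧
  10 ≤ r ∧ r ≤ 200 ∧ 10 ≤ L ∧ L ≤ 200 ∧
  0.0193 * r ≤ d1 ∧ 0.00954 * r ≤ d2 ∧
  Real.pi * r ^ 2 * L + (4 * Real.pi / 3) * r ^ 3 ≥ 1296000 ∧ L ≤ 240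

lemma quant_step {x : ℝ} {I : ℤ} (k : ℤ) (hx : x = (I : ℝ) * 0.0625)
    (h : (k : ℝ) * 0.0625 < x) : ((k : ℝ) + 1) * 0.0625 ≤ x := by
  have h2 : (k : ℝ) < (I : ℝ) := by rw [hx] at h; nlinarith
  have h3 : k < I := by exact_mod_cast h2
  have h4 : (k : ℝ) + 1 ≤ (I : ℝ) := by exact_mod_cast h3
  rw [hx]; nlinarith

set_option maxHeartbeats 0 in
/-- x* = (0.8125, 0.4375, R*, L*) is a global minimizer of the pressure
vessel design problem. -/
theorem pv_xstar_global_min :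
    let Rs : ℝ := 0.8125 / 0.0193
    let Ls : ℝ := 1296000 / (Real.pi * Rs ^ 2) - (4 / 3) * Rs
    ∀ d1 d2 r L : ℝ, pvFeasible d1 d2 r L →
      pvObj d1 d2 r L ≥ pvObj 0.8125 0.4375 Rs Ls := by
  intro Rs Ls d1 d2 r L h
  obtain ⟨⟨I, J, hI1, hI99, hJ1, hJ99, hd1I, hd2J⟩, hr10, hr200, hL10, hL200, hc1, hc2, hvol, hL240⟩ := h
  have hRs : Rs = 0.8125 / 0.0193 := rfl
  have hLs0 : Ls = 1296000 / (Real.pi * Rs ^ 2) - (4 / 3) * Rs := rfl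
  have hπ : (0:ℝ) < Real.pi := Real.pi_pos
  have hπl : 3.141592 < Real.pi := Real.pi_gt_d6
  have hπu : Real.pi < 3.141593 := Real.pi_lt_d6
  set u : ℝ := Real.pi⁻¹ with hu_def
  have hu1 : u * Real.pi = 1 := inv_mul_cancel₀ (ne_of_gt hπ)
  have hu0 : (0:ℝ) < u := by positivity
  have hulo : (0.3183098:ℝ) < u := by nlinarith
  have huhi : u < (0.3183100:ℝ) := by nlinarith
  have hrpos : (0:ℝ) < r := by linarith
  have hLpos : (0:ℝ) < L := by linarith
  have hK : 1296000 * u - 4/3 * r^3 ≤ r^2 * L := by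
    have h2 : u * 1296000 ≤ u * (Real.pi * r ^ 2 * L + 4 * Real.pi / 3 * r ^ 3) :=
      mul_le_mul_of_nonneg_left hvol hu0.le
    have h3 : u * (Real.pi * r ^ 2 * L + 4 * Real.pi / 3 * r ^ 3)
        = (u * Real.pi) * (r^2 * L + 4/3 * r^3) := by ring
    rw [h3, hu1, one_mul] at h2
    linarith
  have hr403 : (40.3:ℝ) < r := by
    by_contra hcon
    push_neg at hcon
    have hA : Real.pi * r^2 * L ≤ Real.pi * r^2 * 200 :=
      mul_le_mul_of_nonneg_left hL200 (by positivity)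
    have hB : (0:ℝ) ≤ 200*r^2 + 4/3*r^3 := by positivity
    nlinarith [mul_le_mul_of_nonneg_right hπu.le hB,
      mul_nonneg (sub_nonneg.2 hcon) hrpos.le,
      mul_nonneg (sub_nonneg.2 hcon) (sq_nonneg r)]
  have hd2b : (0.4375:ℝ) ≤ d2 := by
    have h6 := quant_step 6 hd2J (by push_cast; linarith)
    push_cast at h6; linarith
  have hfs_eq : pvObj 0.8125 0.4375 Rs Ls = (1068524507709/62500000) * u + (70690038419/114428928) := by
    simp only [pvObj, hLs0, hRs, hu_def]
    have hπne : Real.pi ≠ 0 := ne_of_gt hπ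
    field_simp
    ring
  have hfs_le : pvObj 0.8125 0.4375 Rs Ls ≤ 6059.717 := by
    rw [hfs_eq]; nlinarith [huhi]
  rcases le_or_gt r (8125/193) with hcase | hlb1
  · -- interval 0
    have hd1b : (0.8125:ℝ) ≤ d1 := by
      have h6 := quant_step 12 hd1I (by push_cast; linarith)
      push_cast at h6; linarith
    rw [ge_iff_le, hfs_eq]
    have hA : 0.6224*0.8125*r*L + 1.7781*0.4375*r^2 + 3.1661*0.8125^2*L + 19.84*0.8125^2*r ≤ pvObj d1 d2 r L := by
      simp only [pvObj]
      nlinarith [mul_nonneg (mul_nonneg (sub_nonneg.2 hd1b) hrpos.le) hLpos.le,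
        mul_nonneg (sub_nonneg.2 hd2b) (sq_nonneg r),
        mul_nonneg (mul_nonneg (sub_nonneg.2 hd1b) (by linarith : (0:ℝ) ≤ d1 + 0.8125)) hLpos.le,
        mul_nonneg (mul_nonneg (sub_nonneg.2 hd1b) (by linarith : (0:ℝ) ≤ d1 + 0.8125)) hrpos.le]
    have harb : (0:ℝ) < 0.6224*0.8125*r + 3.1661*0.8125^2 := by nlinarith
    have h1 := mul_le_mul_of_nonneg_left hK harb.le
    have hQ : (0:ℝ) ≤ (1068524507709/62500000) * r * u + (6434433369/100000) * u - (5437695263/370560000) * r^2 - (49753/480000) * r^3 := by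
      nlinarith [mul_nonneg (sub_nonneg.2 hulo.le) (by linarith : (0:ℝ) ≤ r - 40.3),
        mul_nonneg (sub_nonneg.2 hcase) (sq_nonneg r), hulo, hr403, hcase,
        mul_nonneg (by linarith : (0:ℝ) ≤ r - 40.3) (by linarith : (0:ℝ) ≤ 8125/193 - r)]
    have h2 : ((0.6224*0.8125*r + 3.1661*0.8125^2)*L + 1.7781*0.4375*r^2 + 19.84*0.8125^2*r - ((1068524507709/62500000) * u + (70690038419/114428928))) * r^2
        = (0.6224*0.8125*r + 3.1661*0.8125^2)*(r^2*L) - (0.6224*0.8125*r + 3.1661*0.8125^2)*(1296000*u - 4/3*r^3)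
          + (8125/193 - r) * ((1068524507709/62500000) * r * u + (6434433369/100000) * u - (5437695263/370560000) * r^2 - (49753/480000) * r^3) := by ring
    have h3 : (0:ℝ) ≤ ((0.6224*0.8125*r + 3.1661*0.8125^2)*L + 1.7781*0.4375*r^2 + 19.84*0.8125^2*r - ((1068524507709/62500000) * u + (70690038419/114428928))) * r^2 := by
      rw [h2]
      have hx : (0:ℝ) ≤ (8125/193 - r) * ((1068524507709/62500000) * r * u + (6434433369/100000) * u - (5437695263/370560000) * r^2 - (49753/480000) * r^3) := mul_nonneg (by linarith) hQ
      nlinarith [h1]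
    nlinarith [h3, mul_pos hrpos hrpos, hA]
  rcases le_or_gt r (8750/193) with hcase | hlb2
  · -- interval 1
    have hd1b : (((7/8)):ℝ) ≤ d1 := by
      have h6 := quant_step 13 hd1I (by push_cast; linarith)
      push_cast at h6; linarith
    have hA : 0.6224*(7/8)*r*L + 1.7781*0.4375*r^2 + 3.1661*(7/8)^2*L + 19.84*(7/8)^2*r ≤ pvObj d1 d2 r L := by
      simp only [pvObj]
      nlinarith [mul_nonneg (mul_nonneg (sub_nonneg.2 hd1b) hrpos.le) hLpos.le,
        mul_nonneg (sub_nonneg.2 hd2b) (sq_nonneg r),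
        mul_nonneg (mul_nonneg (sub_nonneg.2 hd1b) (by linarith : (0:ℝ) ≤ d1 + (7/8))) hLpos.le,
        mul_nonneg (mul_nonneg (sub_nonneg.2 hd1b) (by linarith : (0:ℝ) ≤ d1 + (7/8))) hrpos.le]
    have harb : (0:ℝ) < 0.6224*(7/8)*r + 3.1661*(7/8)^2 := by nlinarith
    have h1 := mul_le_mul_of_nonneg_left hK harb.le
    have hT : (0:ℝ) ≤ (24857/480000) * r^4 + (5739811/480000) * r^3 - (6059717/1000) * r^2 + (351036822087/1562500) * r + (199998040536441/200000000) := by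
      have p1 : (0:ℝ) ≤ r - (8125/193) := by linarith
      have q1 : (0:ℝ) ≤ (8750/193) - r := by linarith
      have p2 := mul_nonneg p1 p1
      have p3 := mul_nonneg p2 p1
      have p4 := mul_nonneg p2 p2
      nlinarith [p1, q1, p2, p3, p4, mul_nonneg q1 p1, mul_nonneg q1 p2, mul_nonneg q1 p3, mul_nonneg q1 p4]
    have h2 : ((0.6224*(7/8)*r + 3.1661*(7/8)^2)*L + 1.7781*0.4375*r^2 + 19.84*(7/8)^2*r - 6059.717) * r^2
        = (0.6224*(7/8)*r + 3.1661*(7/8)^2)*(r^2*L) - (0.6224*(7/8)*r + 3.1661*(7/8)^2)*(1296000*u - 4/3*r^3)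
          + 1296000*(0.6224*(7/8)*r + 3.1661*(7/8)^2)*(u - 0.3183098) + ((24857/480000) * r^4 + (5739811/480000) * r^3 - (6059717/1000) * r^2 + (351036822087/1562500) * r + (199998040536441/200000000)) := by ring
    have h3 : (0:ℝ) ≤ ((0.6224*(7/8)*r + 3.1661*(7/8)^2)*L + 1.7781*0.4375*r^2 + 19.84*(7/8)^2*r - 6059.717) * r^2 := by
      rw [h2]
      have hx : (0:ℝ) ≤ 1296000*(0.6224*(7/8)*r + 3.1661*(7/8)^2)*(u - 0.3183098) := by
        apply mul_nonneg (by positivity) (by linarith)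
      nlinarith [h1, hT]
    have h4 : (6059.717:ℝ) ≤ (0.6224*(7/8)*r + 3.1661*(7/8)^2)*L + 1.7781*0.4375*r^2 + 19.84*(7/8)^2*r := by nlinarith [h3, mul_pos hrpos hrpos]
    linarith [hA, h4, hfs_le]
  rcases le_or_gt r (9375/193) with hcase | hlb3
  · -- interval 2
    have hd1b : (((15/16)):ℝ) ≤ d1 := by
      have h6 := quant_step 14 hd1I (by push_cast; linarith)
      push_cast at h6; linarith
    have hA : 0.6224*(15/16)*r*L + 1.7781*(0.00954*r)*r^2 + 3.1661*(15/16)^2*L + 19.84*(15/16)^2*r ≤ pvObj d1 d2 r L := by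
      simp only [pvObj]
      nlinarith [mul_nonneg (mul_nonneg (sub_nonneg.2 hd1b) hrpos.le) hLpos.le,
        mul_nonneg (sub_nonneg.2 hc2) (sq_nonneg r),
        mul_nonneg (mul_nonneg (sub_nonneg.2 hd1b) (by linarith : (0:ℝ) ≤ d1 + (15/16))) hLpos.le,
        mul_nonneg (mul_nonneg (sub_nonneg.2 hd1b) (by linarith : (0:ℝ) ≤ d1 + (15/16))) hrpos.le]
    have harb : (0:ℝ) < 0.6224*(15/16)*r + 3.1661*(15/16)^2 := by nlinarith
    have h1 := mul_le_mul_of_nonneg_left hK harb.le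
    have hT : (0:ℝ) ≤ (8481537/500000000) * r^5 - (389/500) * r^4 + (351417/25600) * r^3 - (6059717/1000) * r^2 + (150444352323/625000) * r + (36734333976081/32000000) := by
      have p1 : (0:ℝ) ≤ r - (8750/193) := by linarith
      have q1 : (0:ℝ) ≤ (9375/193) - r := by linarith
      have p2 := mul_nonneg p1 p1
      have p3 := mul_nonneg p2 p1
      have p4 := mul_nonneg p2 p2
      nlinarith [p1, q1, p2, p3, p4, mul_nonneg q1 p1, mul_nonneg q1 p2, mul_nonneg q1 p3, mul_nonneg q1 p4]
    have h2 : ((0.6224*(15/16)*r + 3.1661*(15/16)^2)*L + 1.7781*(0.00954*r)*r^2 + 19.84*(15/16)^2*r - 6059.717) * r^2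
        = (0.6224*(15/16)*r + 3.1661*(15/16)^2)*(r^2*L) - (0.6224*(15/16)*r + 3.1661*(15/16)^2)*(1296000*u - 4/3*r^3)
          + 1296000*(0.6224*(15/16)*r + 3.1661*(15/16)^2)*(u - 0.3183098) + ((8481537/500000000) * r^5 - (389/500) * r^4 + (351417/25600) * r^3 - (6059717/1000) * r^2 + (150444352323/625000) * r + (36734333976081/32000000)) := by ring
    have h3 : (0:ℝ) ≤ ((0.6224*(15/16)*r + 3.1661*(15/16)^2)*L + 1.7781*(0.00954*r)*r^2 + 19.84*(15/16)^2*r - 6059.717) * r^2 := by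
      rw [h2]
      have hx : (0:ℝ) ≤ 1296000*(0.6224*(15/16)*r + 3.1661*(15/16)^2)*(u - 0.3183098) := by
        apply mul_nonneg (by positivity) (by linarith)
      nlinarith [h1, hT]
    have h4 : (6059.717:ℝ) ≤ (0.6224*(15/16)*r + 3.1661*(15/16)^2)*L + 1.7781*(0.00954*r)*r^2 + 19.84*(15/16)^2*r := by nlinarith [h3, mul_pos hrpos hrpos]
    linarith [hA, h4, hfs_le]
  rcases le_or_gt r (10000/193) with hcase | hlb4
  · -- interval 3
    have hd1b : ((1):ℝ) ≤ d1 := by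
      have h6 := quant_step 15 hd1I (by push_cast; linarith)
      push_cast at h6; linarith
    have hA : 0.6224*1*r*L + 1.7781*(0.00954*r)*r^2 + 3.1661*1^2*L + 19.84*1^2*r ≤ pvObj d1 d2 r L := by
      simp only [pvObj]
      nlinarith [mul_nonneg (mul_nonneg (sub_nonneg.2 hd1b) hrpos.le) hLpos.le,
        mul_nonneg (sub_nonneg.2 hc2) (sq_nonneg r),
        mul_nonneg (mul_nonneg (sub_nonneg.2 hd1b) (by linarith : (0:ℝ) ≤ d1 + 1)) hLpos.le,
        mul_nonneg (mul_nonneg (sub_nonneg.2 hd1b) (by linarith : (0:ℝ) ≤ d1 + 1)) hrpos.le]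
    have harb : (0:ℝ) < 0.6224*1*r + 3.1661*1^2 := by nlinarith
    have h1 := mul_le_mul_of_nonneg_left hK harb.le
    have hT : (0:ℝ) ≤ (8481537/500000000) * r^5 - (1556/1875) * r^4 + (117139/7500) * r^3 - (6059717/1000) * r^2 + (100296234882/390625) * r + (4081592664009/3125000) := by
      have p1 : (0:ℝ) ≤ r - (9375/193) := by linarith
      have q1 : (0:ℝ) ≤ (10000/193) - r := by linarith
      have p2 := mul_nonneg p1 p1
      have p3 := mul_nonneg p2 p1
      have p4 := mul_nonneg p2 p2
      nlinarith [p1, q1, p2, p3, p4, mul_nonneg q1 p1, mul_nonneg q1 p2, mul_nonneg q1 p3, mul_nonneg q1 p4]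
    have h2 : ((0.6224*1*r + 3.1661*1^2)*L + 1.7781*(0.00954*r)*r^2 + 19.84*1^2*r - 6059.717) * r^2
        = (0.6224*1*r + 3.1661*1^2)*(r^2*L) - (0.6224*1*r + 3.1661*1^2)*(1296000*u - 4/3*r^3)
          + 1296000*(0.6224*1*r + 3.1661*1^2)*(u - 0.3183098) + ((8481537/500000000) * r^5 - (1556/1875) * r^4 + (117139/7500) * r^3 - (6059717/1000) * r^2 + (100296234882/390625) * r + (4081592664009/3125000)) := by ring
    have h3 : (0:ℝ) ≤ ((0.6224*1*r + 3.1661*1^2)*L + 1.7781*(0.00954*r)*r^2 + 19.84*1^2*r - 6059.717) * r^2 := by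
      rw [h2]
      have hx : (0:ℝ) ≤ 1296000*(0.6224*1*r + 3.1661*1^2)*(u - 0.3183098) := by
        apply mul_nonneg (by positivity) (by linarith)
      nlinarith [h1, hT]
    have h4 : (6059.717:ℝ) ≤ (0.6224*1*r + 3.1661*1^2)*L + 1.7781*(0.00954*r)*r^2 + 19.84*1^2*r := by nlinarith [h3, mul_pos hrpos hrpos]
    linarith [hA, h4, hfs_le]
  rcases le_or_gt r (10625/193) with hcase | hlb5
  · -- interval 4
    have hd1b : (((17/16)):ℝ) ≤ d1 := by
      have h6 := quant_step 16 hd1I (by push_cast; linarith)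
      push_cast at h6; linarith
    have hA : 0.6224*(17/16)*r*L + 1.7781*(0.00954*r)*r^2 + 3.1661*(17/16)^2*L + 19.84*(17/16)^2*r ≤ pvObj d1 d2 r L := by
      simp only [pvObj]
      nlinarith [mul_nonneg (mul_nonneg (sub_nonneg.2 hd1b) hrpos.le) hLpos.le,
        mul_nonneg (sub_nonneg.2 hc2) (sq_nonneg r),
        mul_nonneg (mul_nonneg (sub_nonneg.2 hd1b) (by linarith : (0:ℝ) ≤ d1 + (17/16))) hLpos.le,
        mul_nonneg (mul_nonneg (sub_nonneg.2 hd1b) (by linarith : (0:ℝ) ≤ d1 + (17/16))) hrpos.le]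
    have harb : (0:ℝ) < 0.6224*(17/16)*r + 3.1661*(17/16)^2 := by nlinarith
    have h1 := mul_le_mul_of_nonneg_left hK harb.le
    have hT : (0:ℝ) ≤ (8481537/500000000) * r^5 - (6613/7500) * r^4 + (33853171/1920000) * r^3 - (6059717/1000) * r^2 + (852517996497/3125000) * r + (1179580279898601/800000000) := by
      have p1 : (0:ℝ) ≤ r - (10000/193) := by linarith
      have q1 : (0:ℝ) ≤ (10625/193) - r := by linarith
      have p2 := mul_nonneg p1 p1
      have p3 := mul_nonneg p2 p1
      have p4 := mul_nonneg p2 p2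
      nlinarith [p1, q1, p2, p3, p4, mul_nonneg q1 p1, mul_nonneg q1 p2, mul_nonneg q1 p3, mul_nonneg q1 p4]
    have h2 : ((0.6224*(17/16)*r + 3.1661*(17/16)^2)*L + 1.7781*(0.00954*r)*r^2 + 19.84*(17/16)^2*r - 6059.717) * r^2
        = (0.6224*(17/16)*r + 3.1661*(17/16)^2)*(r^2*L) - (0.6224*(17/16)*r + 3.1661*(17/16)^2)*(1296000*u - 4/3*r^3)
          + 1296000*(0.6224*(17/16)*r + 3.1661*(17/16)^2)*(u - 0.3183098) + ((8481537/500000000) * r^5 - (6613/7500) * r^4 + (33853171/1920000) * r^3 - (6059717/1000) * r^2 + (852517996497/3125000) * r + (1179580279898601/800000000)) := by ring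
    have h3 : (0:ℝ) ≤ ((0.6224*(17/16)*r + 3.1661*(17/16)^2)*L + 1.7781*(0.00954*r)*r^2 + 19.84*(17/16)^2*r - 6059.717) * r^2 := by
      rw [h2]
      have hx : (0:ℝ) ≤ 1296000*(0.6224*(17/16)*r + 3.1661*(17/16)^2)*(u - 0.3183098) := by
        apply mul_nonneg (by positivity) (by linarith)
      nlinarith [h1, hT]
    have h4 : (6059.717:ℝ) ≤ (0.6224*(17/16)*r + 3.1661*(17/16)^2)*L + 1.7781*(0.00954*r)*r^2 + 19.84*(17/16)^2*r := by nlinarith [h3, mul_pos hrpos hrpos]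
    linarith [hA, h4, hfs_le]
  rcases le_or_gt r (11250/193) with hcase | hlb6
  · -- interval 5
    have hd1b : (((9/8)):ℝ) ≤ d1 := by
      have h6 := quant_step 17 hd1I (by push_cast; linarith)
      push_cast at h6; linarith
    have hA : 0.6224*(9/8)*r*L + 1.7781*(0.00954*r)*r^2 + 3.1661*(9/8)^2*L + 19.84*(9/8)^2*r ≤ pvObj d1 d2 r L := by
      simp only [pvObj]
      nlinarith [mul_nonneg (mul_nonneg (sub_nonneg.2 hd1b) hrpos.le) hLpos.le,
        mul_nonneg (sub_nonneg.2 hc2) (sq_nonneg r),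
        mul_nonneg (mul_nonneg (sub_nonneg.2 hd1b) (by linarith : (0:ℝ) ≤ d1 + (9/8))) hLpos.le,
        mul_nonneg (mul_nonneg (sub_nonneg.2 hd1b) (by linarith : (0:ℝ) ≤ d1 + (9/8))) hrpos.le]
    have harb : (0:ℝ) < 0.6224*(9/8)*r + 3.1661*(9/8)^2 := by nlinarith
    have h1 := mul_le_mul_of_nonneg_left hK harb.le
    have hT : (0:ℝ) ≤ (8481537/500000000) * r^5 - (1167/1250) * r^4 + (3162753/160000) * r^3 - (6059717/1000) * r^2 + (451333056969/1562500) * r + (330609005784729/200000000) := by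
      have p1 : (0:ℝ) ≤ r - (10625/193) := by linarith
      have q1 : (0:ℝ) ≤ (11250/193) - r := by linarith
      have p2 := mul_nonneg p1 p1
      have p3 := mul_nonneg p2 p1
      have p4 := mul_nonneg p2 p2
      nlinarith [p1, q1, p2, p3, p4, mul_nonneg q1 p1, mul_nonneg q1 p2, mul_nonneg q1 p3, mul_nonneg q1 p4]
    have h2 : ((0.6224*(9/8)*r + 3.1661*(9/8)^2)*L + 1.7781*(0.00954*r)*r^2 + 19.84*(9/8)^2*r - 6059.717) * r^2
        = (0.6224*(9/8)*r + 3.1661*(9/8)^2)*(r^2*L) - (0.6224*(9/8)*r + 3.1661*(9/8)^2)*(1296000*u - 4/3*r^3)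
          + 1296000*(0.6224*(9/8)*r + 3.1661*(9/8)^2)*(u - 0.3183098) + ((8481537/500000000) * r^5 - (1167/1250) * r^4 + (3162753/160000) * r^3 - (6059717/1000) * r^2 + (451333056969/1562500) * r + (330609005784729/200000000)) := by ring
    have h3 : (0:ℝ) ≤ ((0.6224*(9/8)*r + 3.1661*(9/8)^2)*L + 1.7781*(0.00954*r)*r^2 + 19.84*(9/8)^2*r - 6059.717) * r^2 := by
      rw [h2]
      have hx : (0:ℝ) ≤ 1296000*(0.6224*(9/8)*r + 3.1661*(9/8)^2)*(u - 0.3183098) := by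
        apply mul_nonneg (by positivity) (by linarith)
      nlinarith [h1, hT]
    have h4 : (6059.717:ℝ) ≤ (0.6224*(9/8)*r + 3.1661*(9/8)^2)*L + 1.7781*(0.00954*r)*r^2 + 19.84*(9/8)^2*r := by nlinarith [h3, mul_pos hrpos hrpos]
    linarith [hA, h4, hfs_le]
  rcases le_or_gt r (11875/193) with hcase | hlb7
  · -- interval 6
    have hd1b : (((19/16)):ℝ) ≤ d1 := by
      have h6 := quant_step 18 hd1I (by push_cast; linarith)
      push_cast at h6; linarith
    have hA : 0.6224*(19/16)*r*L + 1.7781*(0.00954*r)*r^2 + 3.1661*(19/16)^2*L + 19.84*(19/16)^2*r ≤ pvObj d1 d2 r L := by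
      simp only [pvObj]
      nlinarith [mul_nonneg (mul_nonneg (sub_nonneg.2 hd1b) hrpos.le) hLpos.le,
        mul_nonneg (sub_nonneg.2 hc2) (sq_nonneg r),
        mul_nonneg (mul_nonneg (sub_nonneg.2 hd1b) (by linarith : (0:ℝ) ≤ d1 + (19/16))) hLpos.le,
        mul_nonneg (mul_nonneg (sub_nonneg.2 hd1b) (by linarith : (0:ℝ) ≤ d1 + (19/16))) hrpos.le]
    have harb : (0:ℝ) < 0.6224*(19/16)*r + 3.1661*(19/16)^2 := by nlinarith
    have h1 := mul_le_mul_of_nonneg_left hK harb.le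
    have hT : (0:ℝ) ≤ (8481537/500000000) * r^5 - (7391/7500) * r^4 + (42287179/1920000) * r^3 - (6059717/1000) * r^2 + (952814231379/3125000) * r + (1473454951707249/800000000) := by
      have p1 : (0:ℝ) ≤ r - (11250/193) := by linarith
      have q1 : (0:ℝ) ≤ (11875/193) - r := by linarith
      have p2 := mul_nonneg p1 p1
      have p3 := mul_nonneg p2 p1
      have p4 := mul_nonneg p2 p2
      nlinarith [p1, q1, p2, p3, p4, mul_nonneg q1 p1, mul_nonneg q1 p2, mul_nonneg q1 p3, mul_nonneg q1 p4]
    have h2 : ((0.6224*(19/16)*r + 3.1661*(19/16)^2)*L + 1.7781*(0.00954*r)*r^2 + 19.84*(19/16)^2*r - 6059.717) * r^2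
        = (0.6224*(19/16)*r + 3.1661*(19/16)^2)*(r^2*L) - (0.6224*(19/16)*r + 3.1661*(19/16)^2)*(1296000*u - 4/3*r^3)
          + 1296000*(0.6224*(19/16)*r + 3.1661*(19/16)^2)*(u - 0.3183098) + ((8481537/500000000) * r^5 - (7391/7500) * r^4 + (42287179/1920000) * r^3 - (6059717/1000) * r^2 + (952814231379/3125000) * r + (1473454951707249/800000000)) := by ring
    have h3 : (0:ℝ) ≤ ((0.6224*(19/16)*r + 3.1661*(19/16)^2)*L + 1.7781*(0.00954*r)*r^2 + 19.84*(19/16)^2*r - 6059.717) * r^2 := by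
      rw [h2]
      have hx : (0:ℝ) ≤ 1296000*(0.6224*(19/16)*r + 3.1661*(19/16)^2)*(u - 0.3183098) := by
        apply mul_nonneg (by positivity) (by linarith)
      nlinarith [h1, hT]
    have h4 : (6059.717:ℝ) ≤ (0.6224*(19/16)*r + 3.1661*(19/16)^2)*L + 1.7781*(0.00954*r)*r^2 + 19.84*(19/16)^2*r := by nlinarith [h3, mul_pos hrpos hrpos]
    linarith [hA, h4, hfs_le]
  · -- r > 11875/193
    have hA : 0.6224*(0.0193*r)*r*10 + 1.7781*(0.00954*r)*r^2 + 19.84*(0.0193*r)^2*r ≤ pvObj d1 d2 r L := by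
      simp only [pvObj]
      nlinarith [mul_nonneg (mul_nonneg (sub_nonneg.2 hc1) hrpos.le) hLpos.le,
        mul_nonneg (mul_nonneg (mul_nonneg (by norm_num : (0:ℝ) ≤ 0.0193) hrpos.le) hrpos.le) (by linarith : (0:ℝ) ≤ L - 10),
        mul_nonneg (sub_nonneg.2 hc2) (sq_nonneg r),
        mul_nonneg (mul_nonneg (sub_nonneg.2 hc1) (by linarith : (0:ℝ) ≤ d1 + 0.0193*r)) hrpos.le,
        mul_nonneg (mul_nonneg (sq_nonneg d1) hrpos.le) hLpos.le,
        mul_nonneg (sq_nonneg d1) hLpos.le]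
    have h4 : (6059.717:ℝ) ≤ 0.6224*(0.0193*r)*r*10 + 1.7781*(0.00954*r)*r^2 + 19.84*(0.0193*r)^2*r := by
      nlinarith [mul_nonneg (mul_nonneg (by linarith : (0:ℝ) ≤ r - 11875/193) hrpos.le) hrpos.le,
        mul_nonneg (by linarith : (0:ℝ) ≤ r - 11875/193) hrpos.le, sq_nonneg (r-11875/193)]
    linarith [hA, h4, hfs_le]
end

section
/- Let R* = 0.8125/0.0193 and L* = 1296000/(π·R*²) − (4/3)·R*. Then 6059.714335048 < f(0.8125, 0.4375, R*, L*) < 6059.714335049; i.e., the global minimum value of the pressure vessel design problem is 6059.714335048436 to twelve decimal places. -/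
/-- The global minimum value of the pressure vessel design problem is
6059.714335048436 to twelve decimal places. -/
theorem pv_min_value_bounds :
    let Rs : ℝ := 0.8125 / 0.0193
    let Ls : ℝ := 1296000 / (Real.pi * Rs ^ 2) - (4 / 3) * Rs
    6059.714335048 < pvObj 0.8125 0.4375 Rs Ls ∧
    pvObj 0.8125 0.4375 Rs Ls < 6059.714335049 := by
  intro Rs Ls
  have hp : (0:ℝ) < Real.pi := Real.pi_pos
  have h1 := Real.pi_gt_d20
  have h2 := Real.pi_lt_d20
  have key : pvObj 0.8125 0.4375 Rs Ls
      = 1068524507709/62500000 / Real.pi + 70690038419/114428928 := by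
    simp only [pvObj, Rs, Ls]
    field_simp
    ring
  rw [key]
  constructor
  · have h : (6059.714335048:ℝ) - 70690038419/114428928
        < 1068524507709/62500000 / Real.pi := by
      rw [lt_div_iff₀ hp]; nlinarith
    linarith
  · have h : (1068524507709:ℝ)/62500000 / Real.pi
        < 6059.714335049 - 70690038419/114428928 := by
      rw [div_lt_iff₀ hp]; nlinarith
    linarith
end

section
/- For every feasible quadruple (d1, d2, r, L) of the pressure vessel design problem, d1 ≥ 0.8125 and d2 ≥ 0.4375. Equivalently, writing d1 = I·0.0625 and d2 = J·0.0625 with integers I, J, every feasible point has I ≥ 13 and J ≥ 7. -/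
set_option maxHeartbeats 1000000 in
/-- For every feasible point of the pressure vessel design problem,
d1 ≥ 0.8125 and d2 ≥ 0.4375; equivalently, the integer multipliers
satisfy I ≥ 13 and J ≥ 7. -/
theorem pv_thickness_lower_bounds (d1 d2 r L : ℝ) (h : pvFeasible d1 d2 r L) :
    d1 ≥ 0.8125 ∧ d2 ≥ 0.4375 ∧
    (∀ I J : ℤ, d1 = (I : ℝ) * 0.0625 → d2 = (J : ℝ) * 0.0625 →
      13 ≤ I ∧ 7 ≤ J) := by
  obtain ⟨⟨I, J, hI1, hI99, hJ1, hJ99, hd1, hd2⟩, hr10, hr200, hL10, hL200,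
    hc1, hc2, hvol, hL240⟩ := h
  have hπ : Real.pi < 3.15 := Real.pi_lt_d2
  have hπ0 : 0 < Real.pi := Real.pi_pos
  have hr : r > 39.32 := by
    by_contra hcon
    push_neg at hcon
    have h1 : r ^ 2 ≤ 39.32 ^ 2 := by nlinarith
    have h2 : r ^ 3 ≤ 39.32 ^ 3 := by nlinarith
    have hr2 : (0:ℝ) < r ^ 2 := by positivity
    have hA : Real.pi * r ^ 2 ≤ 3.15 * 39.32 ^ 2 := by nlinarith
    have h3 : Real.pi * r ^ 2 * L ≤ 3.15 * 39.32 ^ 2 * 200 := by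
      calc Real.pi * r ^ 2 * L ≤ Real.pi * r ^ 2 * 200 := by nlinarith
        _ ≤ 3.15 * 39.32 ^ 2 * 200 := by linarith
    have h4 : (4 * Real.pi / 3) * r ^ 3 ≤ (4 * 3.15 / 3) * 39.32 ^ 3 := by nlinarith
    nlinarith
  have hd1' : d1 > 0.75 := by linarith
  have hd2' : d2 > 0.375 := by linarith
  have hI13 : (13 : ℝ) ≤ (I : ℝ) := by
    by_contra hcon
    push_neg at hcon
    have : I ≤ 12 := by exact_mod_cast Int.lt_add_one_iff.mp (by exact_mod_cast hcon)
    have : (I : ℝ) ≤ 12 := by exact_mod_cast this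
    nlinarith
  have hJ7 : (7 : ℝ) ≤ (J : ℝ) := by
    by_contra hcon
    push_neg at hcon
    have : J ≤ 6 := by exact_mod_cast Int.lt_add_one_iff.mp (by exact_mod_cast hcon)
    have : (J : ℝ) ≤ 6 := by exact_mod_cast this
    nlinarith
  have hge1 : d1 ≥ 0.8125 := by rw [hd1]; linarith
  have hge2 : d2 ≥ 0.4375 := by rw [hd2]; linarith
  refine ⟨hge1, hge2, fun I' J' h1' h2' => ⟨?_, ?_⟩⟩
  · have : (13 : ℝ) ≤ (I' : ℝ) := by rw [h1'] at hge1; linarith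
    exact_mod_cast this
  · have : (7 : ℝ) ≤ (J' : ℝ) := by rw [h2'] at hge2; linarith
    exact_mod_cast this
end

section
/- Let R* = 0.8125/0.0193 and L* = 1296000/(π·R*²) − (4/3)·R*, and let g(r,L) = 0.5057·r·L + 0.77791875·r² + 2.090120703125·L + 13.0975·r. Then for all real r, L with 0 < r ≤ R*, 10 ≤ L ≤ 200, and π·r²·L + (4π/3)·r³ ≥ 1296000, we have g(r,L) ≥ g(R*, L*). -/
/-- The reduced pressure vessel objective with d1 = 0.8125 and d2 = 0.4375. -/
noncomputable def pvRed (r L : ℝ) : ℝ :=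
  0.5057 * r * L + 0.77791875 * r ^ 2 + 2.090120703125 * L + 13.0975 * r

set_option maxHeartbeats 2000000

/-- For the reduced pressure vessel problem, (R*, L*) minimizes the reduced
objective over the region 0 < r ≤ R*, 10 ≤ L ≤ 200 with the volume
constraint. -/
theorem pv_reduced_min :
    let Rs : ℝ := 0.8125 / 0.0193
    let Ls : ℝ := 1296000 / (Real.pi * Rs ^ 2) - (4 / 3) * Rs
    ∀ r L : ℝ, 0 < r → r ≤ Rs → 10 ≤ L → L ≤ 200 →
      Real.pi * r ^ 2 * L + (4 * Real.pi / 3) * r ^ 3 ≥ 1296000 →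
      pvRed r L ≥ pvRed Rs Ls := by
  intro Rs Ls r L hr hrR hL10 hL200 hvol
  have hπl : (3.1415:ℝ) < Real.pi := by linarith [Real.pi_gt_d6]
  have hπu : Real.pi < 3.1416 := by linarith [Real.pi_lt_d6]
  have hπ0 : (0:ℝ) < Real.pi := by linarith
  have hr0 : r ≠ 0 := ne_of_gt hr
  have hrR' : r ≤ 0.8125 / 0.0193 := hrR
  set Lr : ℝ := 1296000 / (Real.pi * r ^ 2) - (4/3) * r with hLr
  have hLge : Lr ≤ L := by
    rw [hLr, sub_le_iff_le_add, div_le_iff₀ (by positivity)]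
    nlinarith [hvol]
  have stepA : pvRed r L ≥ pvRed r Lr := by
    unfold pvRed
    nlinarith [mul_nonneg (by nlinarith : (0:ℝ) ≤ 0.5057 * r + 2.090120703125)
      (by linarith : (0:ℝ) ≤ L - Lr)]
  have stepB : pvRed r Lr ≥ pvRed (0.8125/0.0193)
      (1296000 / (Real.pi * (0.8125/0.0193) ^ 2) - (4/3) * (0.8125/0.0193)) := by
    unfold pvRed
    rw [hLr, ge_iff_le, ← sub_nonneg]
    have key : (0.5057 * r * (1296000 / (Real.pi * r ^ 2) - (4/3) * r) + 0.77791875 * r ^ 2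
          + 2.090120703125 * (1296000 / (Real.pi * r ^ 2) - (4/3) * r) + 13.0975 * r)
        - (0.5057 * (0.8125/0.0193) * (1296000 / (Real.pi * (0.8125/0.0193) ^ 2) - (4/3) * (0.8125/0.0193))
          + 0.77791875 * (0.8125/0.0193) ^ 2
          + 2.090120703125 * (1296000 / (Real.pi * (0.8125/0.0193) ^ 2) - (4/3) * (0.8125/0.0193))
          + 13.0975 * (0.8125/0.0193))
        = ((0.5057 * 1296000 * r * (0.8125/0.0193)
            + 2.090120703125 * 1296000 * ((0.8125/0.0193) + r)
            - Real.pi * r^2 * (0.8125/0.0193)^2 *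
              ((0.77791875 - 0.5057*4/3) * (r + (0.8125/0.0193)) + (13.0975 - 2.090120703125*4/3)))
            * ((0.8125/0.0193) - r)) / (Real.pi * r^2 * (0.8125/0.0193)^2) := by
      field_simp
      ring
    rw [key]
    apply div_nonneg _ (by positivity)
    apply mul_nonneg _ (by linarith)
    nlinarith [mul_nonneg (mul_nonneg (mul_nonneg hr.le hr.le) hr.le)
        (by linarith : (0:ℝ) ≤ 0.8125/0.0193 - r),
      mul_nonneg (mul_nonneg hr.le hr.le) (by linarith : (0:ℝ) ≤ 0.8125/0.0193 - r),
      mul_nonneg hr.le (by linarith : (0:ℝ) ≤ 0.8125/0.0193 - r),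
      mul_nonneg (mul_nonneg (mul_nonneg hr.le hr.le) hr.le) (by linarith : (0:ℝ) ≤ 3.1416 - Real.pi),
      mul_nonneg (mul_nonneg hr.le hr.le) (by linarith : (0:ℝ) ≤ 3.1416 - Real.pi),
      sq_nonneg r, mul_pos hr hr]
  exact le_trans stepB stepA
end

section
/- Let r1 be the unique positive real root of 200·π·r² + (4π/3)·r³ = 1296000, let g(r,L) = 0.5057·r·L + 0.77791875·r² + 2.090120703125·L + 13.0975·r, let R* = 0.8125/0.0193 and L* = 1296000/(π·R*²) − (4/3)·R*. Then 6288.677045 < g(r1, 200) < 6288.677046; in particular g(r1, 200) > g(R*, L*), so the endpoint (r1, 200) of the volume-equality curve is not the global optimum. -/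
set_option maxHeartbeats 2000000 in
/-- At the other endpoint (r1, 200) of the volume-equality curve, where r1 is
the unique positive root of 200·π·r² + (4π/3)·r³ = 1296000, the reduced
objective satisfies 6288.677045 < g(r1, 200) < 6288.677046; in particular
g(r1, 200) > g(R*, L*), so (r1, 200) is not the global optimum. -/
theorem pv_other_endpoint_value :
    let Rs : ℝ := 0.8125 / 0.0193
    let Ls : ℝ := 1296000 / (Real.pi * Rs ^ 2) - (4 / 3) * Rs
    ∀ r1 : ℝ, 0 < r1 →
      200 * Real.pi * r1 ^ 2 + (4 * Real.pi / 3) * r1 ^ 3 = 1296000 →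
      (6288.677045 < pvRed r1 200 ∧ pvRed r1 200 < 6288.677046) ∧
        pvRed r1 200 > pvRed Rs Ls := by
  intro Rs Ls r1 hr1 heq
  have hπl := Real.pi_gt_d20
  have hπu := Real.pi_lt_d20
  have hπ0 : (0:ℝ) < Real.pi := Real.pi_pos
  set a : ℝ := 8063923744819/200000000000 with ha_def
  set b : ℝ := 40319618724101/1000000000000 with hb_def
  have hkey : Real.pi * (200 * r1^2 + 4/3 * r1^3) = 1296000 := by
    linear_combination heq
  have hhpos : 0 < 200 * r1^2 + 4/3 * r1^3 := by positivity
  -- upper pi bound gives lower bound on h(r1)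
  have hA : (3.14159265358979323847 : ℝ) * (200 * r1^2 + 4/3 * r1^3) > 1296000 := by
    nlinarith [mul_pos (sub_pos.2 hπu) hhpos]
  have hB : (3.14159265358979323846 : ℝ) * (200 * r1^2 + 4/3 * r1^3) < 1296000 := by
    nlinarith [mul_pos (sub_pos.2 hπl) hhpos]
  -- compare h at rational endpoints
  have ha' : (200 * a^2 + 4/3 * a^3 : ℝ) < 200 * r1^2 + 4/3 * r1^3 := by
    have hnum : (3.14159265358979323847 : ℝ) * (200 * a^2 + 4/3 * a^3) < 1296000 := by
      rw [ha_def]; norm_num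
    nlinarith [hA, hnum]
  have hb' : (200 * r1^2 + 4/3 * r1^3 : ℝ) < 200 * b^2 + 4/3 * b^3 := by
    have hnum : (3.14159265358979323846 : ℝ) * (200 * b^2 + 4/3 * b^3) > 1296000 := by
      rw [hb_def]; norm_num
    nlinarith [hB, hnum]
  have hapos : (0:ℝ) < a := by rw [ha_def]; norm_num
  have hbpos : (0:ℝ) < b := by rw [hb_def]; norm_num
  -- r1 is between a and b
  have har : a < r1 := by
    by_contra hle
    push_neg at hle
    have key : 0 ≤ (a - r1) * (200 * (a + r1) + 4/3 * (a^2 + a*r1 + r1^2)) :=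
      mul_nonneg (sub_nonneg.2 hle) (by positivity)
    nlinarith [key, ha']
  have hrb : r1 < b := by
    by_contra hle
    push_neg at hle
    have key : 0 ≤ (r1 - b) * (200 * (r1 + b) + 4/3 * (r1^2 + r1*b + b^2)) :=
      mul_nonneg (sub_nonneg.2 hle) (by positivity)
    nlinarith [key, hb']
  -- g(r1, 200) bounds
  have hgform : pvRed r1 200 = 0.77791875 * r1^2 + 114.2375 * r1 + 418.024140625 := by
    unfold pvRed; ring
  have hglow : (6288.677045 : ℝ) < pvRed r1 200 := by
    rw [hgform]
    nlinarith [mul_pos (sub_pos.2 har) (add_pos hapos hr1), har]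
  have hghigh : pvRed r1 200 < (6288.677046 : ℝ) := by
    rw [hgform]
    nlinarith [mul_pos (sub_pos.2 hrb) (add_pos hr1 hbpos), hrb]
  refine ⟨⟨hglow, hghigh⟩, ?_⟩
  -- bound pvRed Rs Ls
  have hπl6 : (3.141592 : ℝ) < Real.pi := Real.pi_gt_d6
  have hRs : Rs = 8125/193 := by norm_num [Rs]
  have hRs2 : Rs^2 = 66015625/37249 := by rw [hRs]; norm_num
  have hd : (3.141592 : ℝ) * (66015625/37249) < Real.pi * Rs^2 := by
    rw [hRs2]; linarith [hπl6]
  have h1 : 1296000 / (Real.pi * Rs^2) <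
      1296000 / ((3.141592 : ℝ) * (66015625/37249)) :=
    div_lt_div_of_pos_left (by norm_num) (by norm_num) hd
  set U : ℝ := 1296000 / ((3.141592 : ℝ) * (66015625/37249)) - (4/3) * Rs with hU
  have hLs : Ls < U := by
    have : Ls = 1296000 / (Real.pi * Rs^2) - (4/3) * Rs := rfl
    rw [this, hU]
    linarith [h1]
  have hcoef : (0:ℝ) < 0.5057 * Rs + 2.090120703125 := by rw [hRs]; norm_num
  have hbound : pvRed Rs Ls < pvRed Rs U := by
    unfold pvRed
    nlinarith [mul_pos hcoef (sub_pos.2 hLs)]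
  have hval : pvRed Rs U < 6288.677045 := by
    unfold pvRed
    rw [hU, hRs]
    norm_num
  exact (hbound.trans hval).trans hglow
end

section
/- Let n ≥ 1 and let a1, …, an be positive real numbers. For all positive reals x1, …, xn with Σ_{i=1}^n a_i/x_i³ ≤ 1, it holds that Σ_{i=1}^n x_i ≥ (Σ_{i=1}^n a_i^{1/4})^{4/3}. -/
/-- The key inequality of the cantilever beam benchmark: for positive weights
a i and positive x i with Σ a i / (x i)³ ≤ 1, one has
Σ x i ≥ (Σ (a i)^(1/4))^(4/3). -/
theorem cantilever_key_inequality (n : ℕ) (hn : 1 ≤ n)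
    (a x : Fin n → ℝ) (ha : ∀ i, 0 < a i) (hx : ∀ i, 0 < x i)
    (hcon : ∑ i, a i / (x i) ^ 3 ≤ 1) :
    ∑ i, x i ≥ (∑ i, (a i) ^ ((1 : ℝ) / 4)) ^ ((4 : ℝ) / 3) := by
  have hpq : Real.HolderConjugate 4 (4/3) := by constructor <;> norm_num
  set f : Fin n → ℝ := fun i => (a i) ^ ((1:ℝ)/4) / (x i) ^ ((3:ℝ)/4) with hf
  set g : Fin n → ℝ := fun i => (x i) ^ ((3:ℝ)/4) with hg
  have key := Real.inner_le_Lp_mul_Lq_of_nonneg (f := f) (g := g) Finset.univ hpq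
    (fun i _ => by have := ha i; have := hx i; positivity)
    (fun i _ => by have := hx i; positivity)
  have e1 : ∀ i, f i * g i = (a i) ^ ((1:ℝ)/4) := by
    intro i
    have : (x i) ^ ((3:ℝ)/4) ≠ 0 := by have := hx i; positivity
    simp only [hf, hg]
    exact div_mul_cancel₀ _ this
  have e2 : ∀ i, f i ^ (4:ℝ) = a i / (x i) ^ 3 := by
    intro i
    have hxi := (hx i).le
    have hai := (ha i).le
    rw [hf]
    rw [Real.div_rpow (by positivity) (by positivity), ← Real.rpow_natCast (x i) 3,
      ← Real.rpow_mul hai, ← Real.rpow_mul hxi]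
    norm_num
  have e3 : ∀ i, g i ^ ((4:ℝ)/3) = x i := by
    intro i
    rw [hg, ← Real.rpow_mul (hx i).le]
    norm_num
  simp only [e1, e2, e3] at key
  have hxsum : 0 ≤ ∑ i, x i := Finset.sum_nonneg fun i _ => (hx i).le
  have hcsum : 0 ≤ ∑ i, a i / (x i) ^ 3 :=
    Finset.sum_nonneg fun i _ => by have := ha i; have := hx i; positivity
  have h1 : (∑ i, a i / (x i) ^ 3) ^ ((1:ℝ)/4) ≤ 1 := by
    calc (∑ i, a i / (x i) ^ 3) ^ ((1:ℝ)/4) ≤ (1:ℝ) ^ ((1:ℝ)/4) :=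
          Real.rpow_le_rpow hcsum hcon (by norm_num)
      _ = 1 := Real.one_rpow _
  have h2 : ∑ i, (a i) ^ ((1:ℝ)/4) ≤ (∑ i, x i) ^ (1/(4/3):ℝ) := by
    calc ∑ i, (a i) ^ ((1:ℝ)/4)
        ≤ (∑ i, a i / (x i) ^ 3) ^ ((1:ℝ)/4) * (∑ i, x i) ^ (1/(4/3):ℝ) := key
      _ ≤ 1 * (∑ i, x i) ^ (1/(4/3):ℝ) := by
          apply mul_le_mul_of_nonneg_right h1 (Real.rpow_nonneg hxsum _)
      _ = (∑ i, x i) ^ (1/(4/3):ℝ) := one_mul _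
  have hTnn : 0 ≤ ∑ i, (a i) ^ ((1:ℝ)/4) :=
    Finset.sum_nonneg fun i _ => Real.rpow_nonneg (ha i).le _
  have := Real.rpow_le_rpow hTnn h2 (by norm_num : (0:ℝ) ≤ 4/3)
  rwa [← Real.rpow_mul hxsum, show (1/(4/3):ℝ) * (4/3) = 1 by norm_num,
    Real.rpow_one] at this
end

section
/- Let n ≥ 1, let a1, …, an be positive reals, set S = Σ_{i=1}^n a_i^{1/4}, and define x_i* = a_i^{1/4}·S^{1/3} for each i. Then x_i* > 0, Σ_{i=1}^n a_i/(x_i*)³ = 1, and Σ_{i=1}^n x_i* = S^{4/3}. Moreover, any positive x1, …, xn with Σ a_i/x_i³ ≤ 1 and Σ x_i = S^{4/3} must satisfy x_i = x_i* for all i; i.e., x* is the unique minimizer of Σ x_i subject to Σ a_i/x_i³ ≤ 1. -/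
private lemma amgm4 (x u : ℝ) (hx : 0 < x) (hu : 0 < u) :
    4 * u * x ^ 3 ≤ 3 * x ^ 4 + u ^ 4 := by
  nlinarith [sq_nonneg (x - u), mul_pos hx hu, sq_nonneg x, sq_nonneg (x + u),
    mul_pos (mul_pos hx hx) hu]

private lemma amgm4_eq (x u : ℝ) (hx : 0 < x) (hu : 0 < u)
    (h : 3 * x ^ 4 + u ^ 4 = 4 * u * x ^ 3) : x = u := by
  have hfac : (x - u) ^ 2 * (3 * x ^ 2 + 2 * u * x + u ^ 2) = 0 := by nlinarith
  have hpos : 0 < 3 * x ^ 2 + 2 * u * x + u ^ 2 := by positivity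
  have := mul_eq_zero.mp hfac
  rcases this with h1 | h2
  · have := pow_eq_zero_iff (n := 2) (by norm_num) |>.mp h1
    linarith
  · linarith

/-- The optimizer of the cantilever beam key inequality: with
S = Σ (a i)^(1/4) and x* i = (a i)^(1/4)·S^(1/3), the point x* is positive,
satisfies the constraint with equality, attains the value S^(4/3), and is
the unique minimizer of Σ x i subject to Σ a i / (x i)³ ≤ 1. -/
theorem cantilever_unique_minimizer (n : ℕ) (hn : 1 ≤ n)
    (a : Fin n → ℝ) (ha : ∀ i, 0 < a i) :
    let S : ℝ := ∑ i, (a i) ^ ((1 : ℝ) / 4)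
    let xstar : Fin n → ℝ := fun i => (a i) ^ ((1 : ℝ) / 4) * S ^ ((1 : ℝ) / 3)
    (∀ i, 0 < xstar i) ∧
    (∑ i, a i / (xstar i) ^ 3 = 1) ∧
    (∑ i, xstar i = S ^ ((4 : ℝ) / 3)) ∧
    (∀ x : Fin n → ℝ, (∀ i, 0 < x i) → ∑ i, a i / (x i) ^ 3 ≤ 1 →
      ∑ i, x i = S ^ ((4 : ℝ) / 3) → ∀ i, x i = xstar i) := by
  intro S xstar
  have hne : Nonempty (Fin n) := ⟨⟨0, hn⟩⟩
  set b : Fin n → ℝ := fun i => (a i) ^ ((1 : ℝ) / 4) with hbdef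
  have hb : ∀ i, 0 < b i := fun i => Real.rpow_pos_of_pos (ha i) _
  have hb4 : ∀ i, (b i) ^ (4 : ℕ) = a i := by
    intro i
    rw [hbdef]
    rw [← Real.rpow_natCast ((a i) ^ ((1:ℝ)/4)) 4, ← Real.rpow_mul (ha i).le]
    norm_num
  have hS : 0 < S := Finset.sum_pos (fun i _ => hb i) Finset.univ_nonempty
  set c : ℝ := S ^ ((1 : ℝ) / 3) with hcdef
  have hc : 0 < c := Real.rpow_pos_of_pos hS _
  have hc3 : c ^ (3 : ℕ) = S := by
    rw [hcdef, ← Real.rpow_natCast (S ^ ((1:ℝ)/3)) 3, ← Real.rpow_mul hS.le]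
    norm_num
  have hc4 : c ^ (4 : ℕ) = S ^ ((4:ℝ)/3) := by
    rw [hcdef, ← Real.rpow_natCast (S ^ ((1:ℝ)/3)) 4, ← Real.rpow_mul hS.le]
    norm_num
  have hSc : S * c = S ^ ((4:ℝ)/3) := by
    rw [hcdef]
    nth_rewrite 1 [← Real.rpow_one S]
    rw [← Real.rpow_add hS]
    norm_num
  have hxstar : ∀ i, xstar i = b i * c := fun i => rfl
  have hxpos : ∀ i, 0 < xstar i := fun i => mul_pos (hb i) hc
  have hconstr : ∑ i, a i / (xstar i) ^ 3 = 1 := by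
    have : ∀ i, a i / (xstar i) ^ 3 = b i / S := by
      intro i
      rw [hxstar i, ← hb4 i, ← hc3, mul_pow,
        div_eq_div_iff (mul_pos (pow_pos (hb i) 3) (pow_pos hc 3)).ne' (pow_pos hc 3).ne']
      ring
    rw [Finset.sum_congr rfl fun i _ => this i, ← Finset.sum_div]
    exact div_self hS.ne'
  have hval : ∑ i, xstar i = S ^ ((4:ℝ)/3) := by
    have : ∑ i, xstar i = (∑ i, b i) * c := by
      rw [Finset.sum_mul]
    rw [this, hSc]
  refine ⟨hxpos, hconstr, hval, ?_⟩
  intro x hx hx1 hx2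
  -- per-term bound: 4 * c * b i ≤ 3 * x i + c^4 * (a i / x i ^ 3)
  have hterm : ∀ i, 4 * (c * b i) ≤ 3 * x i + c ^ 4 * (a i / x i ^ 3) := by
    intro i
    have h3 : (0:ℝ) < x i ^ 3 := pow_pos (hx i) 3
    rw [← hb4 i]
    have key := amgm4 (x i) (c * b i) (hx i) (mul_pos hc (hb i))
    rw [← sub_nonneg]
    have hident : 3 * x i + c ^ 4 * (b i ^ 4 / x i ^ 3) - 4 * (c * b i)
        = (3 * (x i) ^ 4 + (c * b i) ^ 4 - 4 * (c * b i) * (x i) ^ 3) / x i ^ 3 := by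
      rw [eq_div_iff h3.ne']
      rw [sub_mul, add_mul, mul_assoc (c ^ 4), div_mul_cancel₀ _ h3.ne']
      ring
    rw [hident]
    exact div_nonneg (by linarith) h3.le
  -- sum of bounds equals the total: equality must hold termwise
  have hsum_lhs : ∑ i, 4 * (c * b i) = 4 * S ^ ((4:ℝ)/3) := by
    rw [← Finset.mul_sum, ← Finset.mul_sum]
    rw [show (∑ i, b i) = S from rfl]
    rw [mul_comm c S, hSc]
  have hsum_rhs : ∑ i, (3 * x i + c ^ 4 * (a i / x i ^ 3)) ≤ 4 * S ^ ((4:ℝ)/3) := by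
    rw [Finset.sum_add_distrib, ← Finset.mul_sum, ← Finset.mul_sum, hx2, hc4]
    nlinarith [Real.rpow_pos_of_pos hS ((4:ℝ)/3)]
  have hsum_eq : ∑ i, 4 * (c * b i) = ∑ i, (3 * x i + c ^ 4 * (a i / x i ^ 3)) := by
    have h1 : ∑ i, 4 * (c * b i) ≤ ∑ i, (3 * x i + c ^ 4 * (a i / x i ^ 3)) :=
      Finset.sum_le_sum fun i _ => hterm i
    linarith [hsum_lhs ▸ h1, hsum_rhs, hsum_lhs]
  have heq : ∀ i ∈ Finset.univ, 4 * (c * b i) = 3 * x i + c ^ 4 * (a i / x i ^ 3) :=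
    (Finset.sum_eq_sum_iff_of_le fun i _ => hterm i).mp hsum_eq
  intro i
  have hi := heq i (Finset.mem_univ i)
  have h3 : (0:ℝ) < x i ^ 3 := pow_pos (hx i) 3
  have hbi := hb4 i
  have : 3 * (x i) ^ 4 + (c * b i) ^ 4 = 4 * (c * b i) * (x i) ^ 3 := by
    have := hi
    rw [← hbi] at this
    field_simp at this
    rw [eq_div_iff h3.ne'] at this
    linear_combination -this
  have := amgm4_eq (x i) (c * b i) (hx i) (mul_pos hc (hb i)) this
  rw [hxstar i, this]; ring
end

section
/- Let S = 61^{1/4} + 37^{1/4} + 19^{1/4} + 7^{1/4} + 1. For every feasible point (x1,…,x5) of the cantilever beam design problem, 0.0624·(x1+x2+x3+x4+x5) ≥ 0.0624·S^{4/3}, and this value is attained: the point x_i* = a_i^{1/4}·S^{1/3} (with (a1,…,a5) = (61,37,19,7,1)) satisfies 0.01 ≤ x_i* ≤ 100 for all i, satisfies the constraint with equality, and has objective value exactly 0.0624·S^{4/3}. Hence 0.0624·S^{4/3} is the global minimum of the cantilever beam design problem. -/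
/-- The weights of the cantilever beam design problem. -/
def cbA : Fin 5 → ℝ := ![61, 37, 19, 7, 1]

/-- Feasibility for the cantilever beam design problem. -/
def cbFeasible (x : Fin 5 → ℝ) : Prop :=
  (∀ i, 0.01 ≤ x i ∧ x i ≤ 100) ∧ (∑ i, cbA i / (x i) ^ 3) - 1 ≤ 0

lemma quarter_pow (a : ℝ) (ha : 0 ≤ a) : (a ^ ((1:ℝ)/4)) ^ (4:ℕ) = a := by
  rw [← Real.rpow_natCast (a ^ ((1:ℝ)/4)) 4, ← Real.rpow_mul ha]
  norm_num

lemma quarter_le (a b : ℝ) (ha : 0 ≤ a) (hb : 0 ≤ b) (h : a ≤ b ^ (4:ℕ)) :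
    a ^ ((1:ℝ)/4) ≤ b := by
  have h1 : a ^ ((1:ℝ)/4) ≤ (b ^ (4:ℕ)) ^ ((1:ℝ)/4) :=
    Real.rpow_le_rpow ha h (by norm_num)
  rwa [← Real.rpow_natCast b 4, ← Real.rpow_mul hb, show ((4:ℕ):ℝ) * (1/4) = 1 by norm_num,
    Real.rpow_one] at h1

lemma cbrt_le (a b : ℝ) (ha : 0 ≤ a) (hb : 0 ≤ b) (h : a ≤ b ^ (3:ℕ)) :
    a ^ ((1:ℝ)/3) ≤ b := by
  have h1 : a ^ ((1:ℝ)/3) ≤ (b ^ (3:ℕ)) ^ ((1:ℝ)/3) :=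
    Real.rpow_le_rpow ha h (by norm_num)
  rwa [← Real.rpow_natCast b 3, ← Real.rpow_mul hb, show ((3:ℕ):ℝ) * (1/3) = 1 by norm_num,
    Real.rpow_one] at h1

lemma le_cbrt (a b : ℝ) (ha : 0 ≤ a) (hb : 0 ≤ b) (h : b ^ (3:ℕ) ≤ a) :
    b ≤ a ^ ((1:ℝ)/3) := by
  have h1 : (b ^ (3:ℕ)) ^ ((1:ℝ)/3) ≤ a ^ ((1:ℝ)/3) :=
    Real.rpow_le_rpow (by positivity) h (by norm_num)
  rwa [← Real.rpow_natCast b 3, ← Real.rpow_mul hb, show ((3:ℕ):ℝ) * (1/3) = 1 by norm_num,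
    Real.rpow_one] at h1

lemma one_le_quarter (a : ℝ) (ha : 1 ≤ a) : 1 ≤ a ^ ((1:ℝ)/4) := by
  have := Real.rpow_le_rpow (by norm_num : (0:ℝ) ≤ 1) ha (by norm_num : (0:ℝ) ≤ 1/4)
  rwa [Real.one_rpow] at this

lemma key_amgm (a t c : ℝ) (ha : 0 ≤ a) (ht : 0 < t) (hc : 0 < c) :
    a ^ ((1:ℝ)/4) ≤ 3 * t / (4 * c) + c ^ 3 * (a / t ^ 3) / 4 := by
  set y := a ^ ((1:ℝ)/4) with hy_def
  have hy : 0 ≤ y := Real.rpow_nonneg ha _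
  have hy4 : y ^ (4:ℕ) = a := quarter_pow a ha
  have hpoly : 4 * (c * y) * t ^ 3 ≤ 3 * t ^ 4 + (c * y) ^ 4 := by
    nlinarith [mul_nonneg (sq_nonneg (t - c * y))
      (by positivity : (0:ℝ) ≤ 3 * t ^ 2 + 2 * t * (c * y) + (c * y) ^ 2)]
  have hden : (0:ℝ) < 4 * c * t ^ 3 := by positivity
  have heq : 3 * t / (4 * c) + c ^ 3 * (a / t ^ 3) / 4 - y
      = (3 * t ^ 4 + (c * y) ^ 4 - 4 * (c * y) * t ^ 3) / (4 * c * t ^ 3) := by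
    rw [← hy4]
    field_simp
  nlinarith [div_nonneg (by linarith : (0:ℝ) ≤ 3 * t ^ 4 + (c * y) ^ 4 - 4 * (c * y) * t ^ 3) hden.le, heq]

/-- a / (a^{1/4} * c)^3 = a^{1/4} / S when c^3 = S. -/
lemma term_eq (a S c : ℝ) (ha : 0 < a) (hS : 0 < S) (hc : 0 < c) (hc3 : c ^ (3:ℕ) = S) :
    a / (a ^ ((1:ℝ)/4) * c) ^ 3 = a ^ ((1:ℝ)/4) / S := by
  have h34 : (a ^ ((1:ℝ)/4)) ^ (3:ℕ) = a ^ ((3:ℝ)/4) := by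
    rw [← Real.rpow_natCast (a ^ ((1:ℝ)/4)) 3, ← Real.rpow_mul ha.le]
    norm_num
  have hmul : a ^ ((1:ℝ)/4) * a ^ ((3:ℝ)/4) = a := by
    rw [← Real.rpow_add ha]; norm_num
  have h34pos : 0 < a ^ ((3:ℝ)/4) := Real.rpow_pos_of_pos ha _
  rw [mul_pow, h34, hc3, div_eq_div_iff (by positivity) hS.ne']
  nlinarith [hmul]

set_option maxHeartbeats 2000000 in
/-- With S = 61^(1/4) + 37^(1/4) + 19^(1/4) + 7^(1/4) + 1, every feasible point
of the cantilever beam problem has objective value at least 0.0624·S^(4/3),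
and this value is attained at x* i = (a i)^(1/4)·S^(1/3), which is feasible
and satisfies the constraint with equality: 0.0624·S^(4/3) is the global
minimum of the cantilever beam design problem. -/
theorem cantilever_global_min :
    let S : ℝ := (61 : ℝ) ^ ((1 : ℝ) / 4) + (37 : ℝ) ^ ((1 : ℝ) / 4) +
      (19 : ℝ) ^ ((1 : ℝ) / 4) + (7 : ℝ) ^ ((1 : ℝ) / 4) + 1
    let xstar : Fin 5 → ℝ := fun i => (cbA i) ^ ((1 : ℝ) / 4) * S ^ ((1 : ℝ) / 3)
    (∀ x : Fin 5 → ℝ, cbFeasible x →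
      0.0624 * (∑ i, x i) ≥ 0.0624 * S ^ ((4 : ℝ) / 3)) ∧
    (∀ i, 0.01 ≤ xstar i ∧ xstar i ≤ 100) ∧
    (∑ i, cbA i / (xstar i) ^ 3) - 1 = 0 ∧
    0.0624 * (∑ i, xstar i) = 0.0624 * S ^ ((4 : ℝ) / 3) := by
  intro S xstar
  have hS_def : S = (61 : ℝ) ^ ((1 : ℝ) / 4) + (37 : ℝ) ^ ((1 : ℝ) / 4) +
      (19 : ℝ) ^ ((1 : ℝ) / 4) + (7 : ℝ) ^ ((1 : ℝ) / 4) + 1 := rfl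
  have hx_def : ∀ i, xstar i = (cbA i) ^ ((1 : ℝ) / 4) * S ^ ((1 : ℝ) / 3) := fun _ => rfl
  clear_value xstar S
  have t61 : (61:ℝ) ^ ((1:ℝ)/4) ≤ 3 := quarter_le 61 3 (by norm_num) (by norm_num) (by norm_num)
  have t37 : (37:ℝ) ^ ((1:ℝ)/4) ≤ 2.5 := quarter_le 37 2.5 (by norm_num) (by norm_num) (by norm_num)
  have t19 : (19:ℝ) ^ ((1:ℝ)/4) ≤ 2.1 := quarter_le 19 2.1 (by norm_num) (by norm_num) (by norm_num)
  have t7 : (7:ℝ) ^ ((1:ℝ)/4) ≤ 1.7 := quarter_le 7 1.7 (by norm_num) (by norm_num) (by norm_num)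
  have b61 : 1 ≤ (61:ℝ) ^ ((1:ℝ)/4) := one_le_quarter 61 (by norm_num)
  have b37 : 1 ≤ (37:ℝ) ^ ((1:ℝ)/4) := one_le_quarter 37 (by norm_num)
  have b19 : 1 ≤ (19:ℝ) ^ ((1:ℝ)/4) := one_le_quarter 19 (by norm_num)
  have b7 : 1 ≤ (7:ℝ) ^ ((1:ℝ)/4) := one_le_quarter 7 (by norm_num)
  have hS_lb : 5 ≤ S := by rw [hS_def]; linarith
  have hS_ub : S ≤ 10.3 := by rw [hS_def]; linarith
  have hS_pos : 0 < S := by linarith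
  obtain ⟨c, hc_def⟩ : ∃ c : ℝ, c = S ^ ((1:ℝ)/3) := ⟨_, rfl⟩
  have hc_pos : 0 < c := hc_def ▸ Real.rpow_pos_of_pos hS_pos _
  have hc3 : c ^ (3:ℕ) = S := by
    rw [hc_def, ← Real.rpow_natCast (S ^ ((1:ℝ)/3)) 3, ← Real.rpow_mul hS_pos.le]
    norm_num
  have hc_ub : c ≤ 2.2 := hc_def ▸ cbrt_le S 2.2 hS_pos.le (by norm_num) (by norm_num; linarith)
  have hc_lb : (1.7:ℝ) ≤ c := hc_def ▸ le_cbrt S 1.7 hS_pos.le (by norm_num) (by norm_num; linarith)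
  have hS43 : S ^ ((4:ℝ)/3) = S * c := by
    rw [hc_def, show (4:ℝ)/3 = 1 + 1/3 by norm_num, Real.rpow_add hS_pos, Real.rpow_one]
  refine ⟨?_, ?_, ?_, ?_⟩
  · -- lower bound
    rintro x ⟨hb, hg⟩
    have hx : ∀ i, 0 < x i := fun i => lt_of_lt_of_le (by norm_num) (hb i).1
    rw [Fin.sum_univ_five] at hg ⊢
    simp only [cbA, Matrix.cons_val_zero, Matrix.cons_val_one, Matrix.head_cons,
      Matrix.cons_val_two, Matrix.tail_cons, Matrix.cons_val_three, Matrix.cons_val_four] at hg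
    have k0 := key_amgm 61 (x 0) c (by norm_num) (hx 0) hc_pos
    have k1 := key_amgm 37 (x 1) c (by norm_num) (hx 1) hc_pos
    have k2 := key_amgm 19 (x 2) c (by norm_num) (hx 2) hc_pos
    have k3 := key_amgm 7 (x 3) c (by norm_num) (hx 3) hc_pos
    have k4 := key_amgm 1 (x 4) c (by norm_num) (hx 4) hc_pos
    rw [Real.one_rpow] at k4
    obtain ⟨T, hT⟩ : ∃ T : ℝ, T = x 0 + x 1 + x 2 + x 3 + x 4 := ⟨_, rfl⟩
    obtain ⟨g, hg_def⟩ : ∃ g : ℝ, g = 61 / x 0 ^ 3 + 37 / x 1 ^ 3 + 19 / x 2 ^ 3 + 7 / x 3 ^ 3 + 1 / x 4 ^ 3 := ⟨_, rfl⟩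
    rw [← hg_def] at hg
    have hsum : S ≤ 3 * T / (4 * c) + c ^ 3 * g / 4 := by
      have heq : 3 * T / (4 * c) + c ^ 3 * g / 4 =
          (3 * x 0 / (4 * c) + c ^ 3 * (61 / x 0 ^ 3) / 4)
          + (3 * x 1 / (4 * c) + c ^ 3 * (37 / x 1 ^ 3) / 4)
          + (3 * x 2 / (4 * c) + c ^ 3 * (19 / x 2 ^ 3) / 4)
          + (3 * x 3 / (4 * c) + c ^ 3 * (7 / x 3 ^ 3) / 4)
          + (3 * x 4 / (4 * c) + c ^ 3 * (1 / x 4 ^ 3) / 4) := by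
        rw [hT, hg_def]; ring
      rw [heq, hS_def]
      linarith
    have hg1 : g ≤ 1 := by linarith
    have hc3g : c ^ 3 * g / 4 ≤ S / 4 := by
      have : c ^ 3 * g ≤ c ^ 3 * 1 := by
        apply mul_le_mul_of_nonneg_left hg1 (by positivity)
      rw [← hc3]; linarith
    have hsum2 : S - S / 4 ≤ 3 * T / (4 * c) := by linarith
    have hmul : (S - S / 4) * (4 * c) ≤ 3 * T / (4 * c) * (4 * c) :=
      mul_le_mul_of_nonneg_right hsum2 (by positivity)
    rw [div_mul_cancel₀ _ (by positivity : (4:ℝ) * c ≠ 0)] at hmul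
    have hfin : S * c ≤ T := by nlinarith [hmul]
    rw [hS43]
    linarith [hfin, hT]
  · -- bounds at xstar
    intro i
    have ha1 : 1 ≤ cbA i := by fin_cases i <;> simp [cbA] <;> norm_num
    have ha_ub : cbA i ^ ((1:ℝ)/4) ≤ 3 := by
      apply quarter_le _ _ (by linarith) (by norm_num)
      fin_cases i <;> simp [cbA] <;> norm_num
    have ha_lb : 1 ≤ cbA i ^ ((1:ℝ)/4) := one_le_quarter _ ha1
    constructor
    · have : (1:ℝ) * 1.7 ≤ cbA i ^ ((1:ℝ)/4) * c :=
        mul_le_mul ha_lb hc_lb (by norm_num) (by linarith)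
      rw [hx_def, ← hc_def]
      linarith
    · have : cbA i ^ ((1:ℝ)/4) * c ≤ 3 * 2.2 :=
        mul_le_mul ha_ub hc_ub (by linarith) (by norm_num)
      rw [hx_def, ← hc_def]
      linarith
  · -- constraint equality at xstar
    have e0 := term_eq 61 S c (by norm_num) hS_pos hc_pos hc3
    have e1 := term_eq 37 S c (by norm_num) hS_pos hc_pos hc3
    have e2 := term_eq 19 S c (by norm_num) hS_pos hc_pos hc3
    have e3 := term_eq 7 S c (by norm_num) hS_pos hc_pos hc3
    have e4 := term_eq 1 S c (by norm_num) hS_pos hc_pos hc3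
    rw [Real.one_rpow] at e4
    rw [Fin.sum_univ_five]
    simp only [hx_def, cbA, Matrix.cons_val_zero, Matrix.cons_val_one, Matrix.head_cons,
      Matrix.cons_val_two, Matrix.tail_cons, Matrix.cons_val_three, Matrix.cons_val_four,
      ← hc_def, Real.one_rpow]
    rw [e0, e1, e2, e3, e4]
    have : ((61:ℝ) ^ ((1:ℝ)/4) + 37 ^ ((1:ℝ)/4) + 19 ^ ((1:ℝ)/4) + 7 ^ ((1:ℝ)/4) + 1) / S = 1 := by
      rw [← hS_def]; exact div_self hS_pos.ne'
    field_simp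
    linarith [this]
  · -- objective value at xstar
    rw [Fin.sum_univ_five]
    simp only [hx_def, cbA, Matrix.cons_val_zero, Matrix.cons_val_one, Matrix.head_cons,
      Matrix.cons_val_two, Matrix.tail_cons, Matrix.cons_val_three, Matrix.cons_val_four,
      ← hc_def, Real.one_rpow]
    rw [hS43, hS_def]
    ring
end

section
/- Let S = 61^{1/4} + 37^{1/4} + 19^{1/4} + 7^{1/4} + 1. Then 1.3399563 < 0.0624·S^{4/3} < 1.3399565; i.e., the global minimum value of the cantilever beam design problem is 1.3399564 to seven significant digits (the paper reports 1.339956367). -/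
lemma rpow_id {a : ℝ} (ha : 0 ≤ a) (p : ℝ) (q : ℝ) (hpq : p * q = 1) :
    (a ^ p) ^ q = a := by
  rw [← Real.rpow_mul ha, hpq, Real.rpow_one]

lemma quarter_lt {a x : ℝ} (ha : 0 ≤ a) (h : a ^ (4:ℕ) < x) :
    a < x ^ ((1:ℝ)/4) := by
  have : (a ^ ((4:ℕ):ℝ)) ^ ((1:ℝ)/4) < x ^ ((1:ℝ)/4) := by
    apply Real.rpow_lt_rpow (by positivity) _ (by norm_num)
    rwa [Real.rpow_natCast]
  rwa [rpow_id ha _ _ (by norm_num)] at this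

lemma lt_quarter {a x : ℝ} (ha : 0 ≤ a) (hx : 0 ≤ x) (h : x < a ^ (4:ℕ)) :
    x ^ ((1:ℝ)/4) < a := by
  have : x ^ ((1:ℝ)/4) < (a ^ ((4:ℕ):ℝ)) ^ ((1:ℝ)/4) := by
    apply Real.rpow_lt_rpow hx _ (by norm_num)
    rwa [Real.rpow_natCast]
  rwa [rpow_id ha _ _ (by norm_num)] at this

lemma lt_four_thirds {c y : ℝ} (hc : 0 ≤ c) (hy : 0 ≤ y)
    (h : c ^ (3:ℕ) < y ^ (4:ℕ)) : c < y ^ ((4:ℝ)/3) := by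
  have : (c ^ ((3:ℕ):ℝ)) ^ ((1:ℝ)/3) < (y ^ ((4:ℕ):ℝ)) ^ ((1:ℝ)/3) := by
    apply Real.rpow_lt_rpow (by positivity) _ (by norm_num)
    rw [Real.rpow_natCast, Real.rpow_natCast]; exact h
  rw [rpow_id hc _ _ (by norm_num), ← Real.rpow_mul hy] at this
  norm_num at this
  exact this

lemma four_thirds_lt {c y : ℝ} (hc : 0 ≤ c) (hy : 0 ≤ y)
    (h : y ^ (4:ℕ) < c ^ (3:ℕ)) : y ^ ((4:ℝ)/3) < c := by
  have : (y ^ ((4:ℕ):ℝ)) ^ ((1:ℝ)/3) < (c ^ ((3:ℕ):ℝ)) ^ ((1:ℝ)/3) := by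
    apply Real.rpow_lt_rpow (by positivity) _ (by norm_num)
    rw [Real.rpow_natCast, Real.rpow_natCast]; exact h
  rw [rpow_id hc _ _ (by norm_num), ← Real.rpow_mul hy] at this
  norm_num at this
  exact this

/-- Numerical bounds for the global minimum value 0.0624·S^(4/3) of the
cantilever beam design problem, where
S = 61^(1/4) + 37^(1/4) + 19^(1/4) + 7^(1/4) + 1. -/
theorem cantilever_min_value_bounds :
    let S : ℝ := (61 : ℝ) ^ ((1 : ℝ) / 4) + (37 : ℝ) ^ ((1 : ℝ) / 4) +
      (19 : ℝ) ^ ((1 : ℝ) / 4) + (7 : ℝ) ^ ((1 : ℝ) / 4) + 1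
    1.3399563 < 0.0624 * S ^ ((4 : ℝ) / 3) ∧
      0.0624 * S ^ ((4 : ℝ) / 3) < 1.3399565 := by
  intro S
  have h61l : (279468239/100000000 : ℝ) < (61:ℝ) ^ ((1:ℝ)/4) :=
    quarter_lt (by norm_num) (by norm_num)
  have h61u : (61:ℝ) ^ ((1:ℝ)/4) < (3493353/1250000 : ℝ) :=
    lt_quarter (by norm_num) (by norm_num) (by norm_num)
  have h37l : (246632571/100000000 : ℝ) < (37:ℝ) ^ ((1:ℝ)/4) :=
    quarter_lt (by norm_num) (by norm_num)
  have h37u : (37:ℝ) ^ ((1:ℝ)/4) < (61658143/25000000 : ℝ) :=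
    lt_quarter (by norm_num) (by norm_num) (by norm_num)
  have h19l : (104389881/50000000 : ℝ) < (19:ℝ) ^ ((1:ℝ)/4) :=
    quarter_lt (by norm_num) (by norm_num)
  have h19u : (19:ℝ) ^ ((1:ℝ)/4) < (208779763/100000000 : ℝ) :=
    lt_quarter (by norm_num) (by norm_num) (by norm_num)
  have h7l : (20332207/12500000 : ℝ) < (7:ℝ) ^ ((1:ℝ)/4) :=
    quarter_lt (by norm_num) (by norm_num)
  have h7u : (7:ℝ) ^ ((1:ℝ)/4) < (162657657/100000000 : ℝ) :=
    lt_quarter (by norm_num) (by norm_num) (by norm_num)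
  have hSl : (997538228/100000000 : ℝ) < S := by unfold S; linarith
  have hSu : S < (997538232/100000000 : ℝ) := by unfold S; linarith
  have hS0 : (0:ℝ) ≤ S := le_trans (by norm_num) hSl.le
  constructor
  · have h1 : (21473658654/1000000000 : ℝ) < S ^ ((4:ℝ)/3) := by
      have := lt_four_thirds (c := (21473658654/1000000000 : ℝ))
        (y := (997538228/100000000 : ℝ)) (by norm_num) (by norm_num) (by norm_num)
      calc (21473658654/1000000000 : ℝ) < (997538228/100000000 : ℝ) ^ ((4:ℝ)/3) := this
        _ ≤ S ^ ((4:ℝ)/3) := Real.rpow_le_rpow (by norm_num) hSl.le (by norm_num)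
    nlinarith [h1]
  · have h2 : S ^ ((4:ℝ)/3) < (21473661858/1000000000 : ℝ) := by
      have := four_thirds_lt (c := (21473661858/1000000000 : ℝ))
        (y := (997538232/100000000 : ℝ)) (by norm_num) (by norm_num) (by norm_num)
      calc S ^ ((4:ℝ)/3) ≤ (997538232/100000000 : ℝ) ^ ((4:ℝ)/3) :=
            Real.rpow_le_rpow hS0 hSu.le (by norm_num)
        _ < (21473661858/1000000000 : ℝ) := this
    nlinarith [h2]
end
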